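/- Fix 0 < T < ∞. Let f, g : (0,T) → [0,∞) be such that f is bounded on every compact subset of (0,T), g is continuous on (0,T), and both f and g are Lebesgue integrable on (0,T). Then the convolution f⋆g(t) = ∫₀^t f(s)·g(t−s) ds is finite for every t ∈ (0,T), belongs to L¹((0,T)), and is continuous on (0,T). -/

import Mathlib

open MeasureTheory Set

/-- Convolution of a locally bounded integrable function with a continuous integrable
function on `(0,T)`: `f ⋆ g (t) = ∫₀^t f(s) g(t-s) ds` is well defined (absolutely
convergent) for every `t ∈ (0,T)`, is in `L¹((0,T))`, and is continuous on `(0,T)`. -/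
theorem stmt4 (T : ℝ) (hT : 0 < T) (f g : ℝ → ℝ)
    (hf_nonneg : ∀ t ∈ Set.Ioo (0 : ℝ) T, 0 ≤ f t)
    (hg_nonneg : ∀ t ∈ Set.Ioo (0 : ℝ) T, 0 ≤ g t)
    (hf_bdd : ∀ K ⊆ Set.Ioo (0 : ℝ) T, IsCompact K → BddAbove (f '' K))
    (hg_cont : ContinuousOn g (Set.Ioo 0 T))
    (hf_int : IntegrableOn f (Set.Ioo 0 T))
    (hg_int : IntegrableOn g (Set.Ioo 0 T)) :
    (∀ t ∈ Set.Ioo (0 : ℝ) T, IntegrableOn (fun s => f s * g (t - s)) (Set.Ioo 0 t)) ∧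
    IntegrableOn (fun t => ∫ s in Set.Ioo (0 : ℝ) t, f s * g (t - s)) (Set.Ioo 0 T) ∧
    ContinuousOn (fun t => ∫ s in Set.Ioo (0 : ℝ) t, f s * g (t - s)) (Set.Ioo 0 T) := by
  classical
  -- measurable version of `f`
  obtain ⟨f', hf'sm, hf'ae⟩ := hf_int.aestronglyMeasurable
  set F₀ : ℝ → ℝ := (Set.Ioo (0 : ℝ) T).indicator (fun x => max (f' x) 0) with hF₀def
  have hF₀meas : Measurable F₀ :=
    (hf'sm.measurable.max measurable_const).indicator measurableSet_Ioo
  have hF₀nn : ∀ x, 0 ≤ F₀ x := fun x =>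
    Set.indicator_nonneg (fun y _ => le_max_right _ _) x
  have hF₀ae : f =ᵐ[volume.restrict (Set.Ioo (0 : ℝ) T)] F₀ := by
    filter_upwards [hf'ae, ae_restrict_mem measurableSet_Ioo] with x hx hmem
    rw [hF₀def, Set.indicator_of_mem hmem, ← hx, max_eq_left (hf_nonneg x hmem)]
  have hF₀int : Integrable F₀ := by
    rw [hF₀def]
    refine (integrable_indicator_iff measurableSet_Ioo).2 ?_
    refine hf_int.congr ?_
    filter_upwards [hf'ae, ae_restrict_mem measurableSet_Ioo] with x hx hmem
    rw [← hx, max_eq_left (hf_nonneg x hmem)]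
  have hF₀zero : ∀ x, x ∉ Set.Ioo (0 : ℝ) T → F₀ x = 0 := fun x hx =>
    Set.indicator_of_notMem hx _
  -- measurable extension of `g`
  set G : ℝ → ℝ := (Set.Ioo (0 : ℝ) T).indicator g with hGdef
  have hGmeas : Measurable G := by
    rw [hGdef, ← Set.piecewise_eq_indicator]
    exact hg_cont.measurable_piecewise continuousOn_const measurableSet_Ioo
  have hGg : Set.EqOn G g (Set.Ioo (0 : ℝ) T) := fun x hx => Set.indicator_of_mem hx g
  have hGcont : ContinuousOn G (Set.Ioo (0 : ℝ) T) := hg_cont.congr hGg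
  have hGnn : ∀ x, 0 ≤ G x := fun x => Set.indicator_nonneg hg_nonneg x
  have hGzero : ∀ x, x ∉ Set.Ioo (0 : ℝ) T → G x = 0 := fun x hx =>
    Set.indicator_of_notMem hx g
  have hGint : Integrable G := (integrable_indicator_iff measurableSet_Ioo).2 hg_int
  -- pointwise integrability (first bullet)
  have hPoint : ∀ t ∈ Set.Ioo (0 : ℝ) T,
      IntegrableOn (fun s => f s * g (t - s)) (Set.Ioo 0 t) := by
    intro t ht
    obtain ⟨ht0, htT⟩ := ht
    have hsub1 : Set.Ioc (0 : ℝ) (t / 2) ⊆ Set.Ioo (0 : ℝ) T := fun s hs =>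
      ⟨hs.1, by rcases hs with ⟨h1, h2⟩; linarith⟩
    have hsub2 : Set.Icc (t / 2) t ⊆ Set.Ioo (0 : ℝ) T := fun s hs =>
      ⟨lt_of_lt_of_le (by linarith) hs.1, lt_of_le_of_lt hs.2 htT⟩
    have part1 : IntegrableOn (fun s => f s * g (t - s)) (Set.Ioc 0 (t / 2)) := by
      have hfint1 : IntegrableOn f (Set.Ioc 0 (t / 2)) := hf_int.mono_set hsub1
      have hmaps : Set.MapsTo (fun s => t - s) (Set.Ioc (0 : ℝ) (t / 2))
          (Set.Ioo (0 : ℝ) T) := fun s hs =>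
        ⟨show (0:ℝ) < t - s by rcases hs with ⟨h1, h2⟩; linarith,
         show t - s < T by rcases hs with ⟨h1, h2⟩; linarith⟩
      have hgm : AEStronglyMeasurable (fun s => g (t - s))
          (volume.restrict (Set.Ioc (0 : ℝ) (t / 2))) :=
        ((hg_cont.comp ((continuous_const.sub continuous_id).continuousOn)
          hmaps).aestronglyMeasurable measurableSet_Ioc)
      obtain ⟨C₁, hC₁⟩ := (isCompact_Icc (a := t / 2) (b := t)).exists_bound_of_continuousOn
        (hg_cont.mono hsub2)
      have hbound : ∀ᵐ s ∂volume.restrict (Set.Ioc (0 : ℝ) (t / 2)),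
          ‖g (t - s)‖ ≤ C₁ := by
        filter_upwards [ae_restrict_mem measurableSet_Ioc] with s hs
        exact hC₁ (t - s) ⟨by rcases hs with ⟨h1, h2⟩; linarith,
          by rcases hs with ⟨h1, h2⟩; linarith⟩
      have h1 : IntegrableOn (fun s => g (t - s) * f s) (Set.Ioc 0 (t / 2)) :=
        hfint1.bdd_mul hgm hbound
      exact h1.congr (Filter.Eventually.of_forall fun s => mul_comm _ _)
    have part2 : IntegrableOn (fun s => f s * g (t - s)) (Set.Ioo (t / 2) t) := by
      obtain ⟨C₂, hC₂⟩ := hf_bdd (Set.Icc (t / 2) t) hsub2 isCompact_Icc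
      have hgint2 : IntegrableOn (fun s => g (t - s)) (Set.Ioo (t / 2) t) := by
        have hmono : IntegrableOn g (Set.Ioo (0 : ℝ) (t / 2)) :=
          hg_int.mono_set (fun s hs => ⟨hs.1, by rcases hs with ⟨h1, h2⟩; linarith⟩)
        have hmp := Measure.measurePreserving_sub_left (volume : Measure ℝ) t
        have hemb := (MeasurableEquiv.subLeft t).measurableEmbedding
        have himg : (fun s : ℝ => t - s) '' Set.Ioo (t / 2) t = Set.Ioo (0 : ℝ) (t / 2) := by
          rw [Set.image_const_sub_Ioo, sub_self, show t - t / 2 = t / 2 by ring]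
        have := ((hmp.restrict_image_emb hemb (Set.Ioo (t / 2) t)).integrable_comp_emb hemb
          (g := g)).2 (by rw [himg]; exact hmono)
        exact this
      have hfm2 : AEStronglyMeasurable f (volume.restrict (Set.Ioo (t / 2) t)) :=
        hf_int.aestronglyMeasurable.mono_measure
          (Measure.restrict_mono (fun s hs => hsub2 ⟨hs.1.le, hs.2.le⟩) le_rfl)
      have hbound : ∀ᵐ s ∂volume.restrict (Set.Ioo (t / 2) t), ‖f s‖ ≤ C₂ := by
        filter_upwards [ae_restrict_mem measurableSet_Ioo] with s hs
        rw [Real.norm_of_nonneg (hf_nonneg s (hsub2 ⟨hs.1.le, hs.2.le⟩))]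
        exact hC₂ ⟨s, ⟨hs.1.le, hs.2.le⟩, rfl⟩
      exact hgint2.bdd_mul hfm2 hbound
    have hunion : Set.Ioc (0 : ℝ) (t / 2) ∪ Set.Ioo (t / 2) t = Set.Ioo (0 : ℝ) t :=
      Set.Ioc_union_Ioo_eq_Ioo (by linarith) (by linarith)
    rw [← hunion]
    exact part1.union part2
  -- the integrand vanishes outside `Ioo 0 t`
  have hphi0 : ∀ t ∈ Set.Ioo (0 : ℝ) T, ∀ s, s ∉ Set.Ioo (0 : ℝ) t →
      F₀ s * G (t - s) = 0 := by
    intro t ht s hs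
    rcases not_and_or.1 hs with h | h
    · rw [hF₀zero s (fun hmem => h hmem.1), zero_mul]
    · push_neg at h
      rw [hGzero (t - s) (fun hmem => by simp only [Set.mem_Ioo] at hmem; linarith [hmem.1]),
        mul_zero]
  -- a.e. equality on `Ioo 0 t`
  have hphi_eq : ∀ t ∈ Set.Ioo (0 : ℝ) T,
      (fun s => f s * g (t - s)) =ᵐ[volume.restrict (Set.Ioo (0 : ℝ) t)]
        (fun s => F₀ s * G (t - s)) := by
    intro t ht
    have hsub : Set.Ioo (0 : ℝ) t ⊆ Set.Ioo (0 : ℝ) T :=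
      Set.Ioo_subset_Ioo le_rfl ht.2.le
    have h1 : f =ᵐ[volume.restrict (Set.Ioo (0 : ℝ) t)] F₀ :=
      ae_restrict_of_ae_restrict_of_subset hsub hF₀ae
    filter_upwards [h1, ae_restrict_mem measurableSet_Ioo] with s h1s hsmem
    rw [h1s, hGg ⟨by simp only [Set.mem_Ioo] at hsmem ⊢; linarith [hsmem.2],
      by simp only [Set.mem_Ioo] at hsmem ⊢; linarith [hsmem.1, ht.2]⟩]
  -- global integrability of the extended integrand
  have hphiInt : ∀ t ∈ Set.Ioo (0 : ℝ) T, Integrable (fun s => F₀ s * G (t - s)) := by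
    intro t ht
    have h : IntegrableOn (fun s => F₀ s * G (t - s)) (Set.Ioo (0 : ℝ) t) :=
      (hPoint t ht).congr (hphi_eq t ht)
    rw [← integrable_indicator_iff measurableSet_Ioo] at h
    refine h.congr (Filter.Eventually.of_forall fun s => ?_)
    exact Set.indicator_apply_eq_self.2 (hphi0 t ht s)
  -- identification of the convolution with the extended one
  have hHeq : ∀ t ∈ Set.Ioo (0 : ℝ) T,
      (∫ s in Set.Ioo (0 : ℝ) t, f s * g (t - s)) = ∫ s, F₀ s * G (t - s) := by
    intro t ht
    rw [integral_congr_ae (hphi_eq t ht)]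
    exact setIntegral_eq_integral_of_forall_compl_eq_zero (hphi0 t ht)
  -- Fubini: integrability of the iterated integral
  have hHint : Integrable (fun t => ∫ s, F₀ s * G (t - s)) := by
    have hKm : Measurable (fun p : ℝ × ℝ => F₀ p.2 * G (p.1 - p.2)) :=
      (hF₀meas.comp measurable_snd).mul (hGmeas.comp (measurable_fst.sub measurable_snd))
    have hK : Integrable (fun p : ℝ × ℝ => F₀ p.2 * G (p.1 - p.2))
        ((volume : Measure ℝ).prod volume) := by
      refine ⟨hKm.aestronglyMeasurable, ?_⟩
      show (∫⁻ p : ℝ × ℝ, (‖F₀ p.2 * G (p.1 - p.2)‖₊ : ENNReal)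
        ∂((volume : Measure ℝ).prod volume)) < ⊤
      have hIg : (∫⁻ u, (‖G u‖₊ : ENNReal)) < ⊤ := hGint.2
      have hIf : (∫⁻ s, (‖F₀ s‖₊ : ENNReal)) < ⊤ := hF₀int.2
      calc (∫⁻ p : ℝ × ℝ, (‖F₀ p.2 * G (p.1 - p.2)‖₊ : ENNReal)
            ∂((volume : Measure ℝ).prod volume))
          = ∫⁻ s, ∫⁻ t, (‖F₀ s * G (t - s)‖₊ : ENNReal) :=
            lintegral_prod_symm' _ hKm.nnnorm.coe_nnreal_ennreal
        _ = ∫⁻ s, (‖F₀ s‖₊ : ENNReal) * ∫⁻ u, (‖G u‖₊ : ENNReal) := by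
            refine lintegral_congr fun s => ?_
            have h1 : ∀ t : ℝ, (‖F₀ s * G (t - s)‖₊ : ENNReal) =
                (‖F₀ s‖₊ : ENNReal) * (‖G (t - s)‖₊ : ENNReal) := fun t => by
              rw [nnnorm_mul, ENNReal.coe_mul]
            simp_rw [h1]
            have hGm' : Measurable fun t : ℝ => (‖G (t - s)‖₊ : ENNReal) :=
              (hGmeas.comp (measurable_id.sub measurable_const) :
                Measurable fun t : ℝ => G (t - s)).nnnorm.coe_nnreal_ennreal
            rw [lintegral_const_mul _ hGm']
            congr 1
            exact (measurePreserving_sub_right (volume : Measure ℝ) s).lintegral_comp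
              hGmeas.nnnorm.coe_nnreal_ennreal
        _ = (∫⁻ s, (‖F₀ s‖₊ : ENNReal)) * ∫⁻ u, (‖G u‖₊ : ENNReal) :=
            lintegral_mul_const _ hF₀meas.nnnorm.coe_nnreal_ennreal
        _ < ⊤ := ENNReal.mul_lt_top hIf hIg
    exact hK.integral_prod_left
  -- continuity of the extended convolution
  have hHcont : ∀ t₀ ∈ Set.Ioo (0 : ℝ) T,
      ContinuousAt (fun t => ∫ s, F₀ s * G (t - s)) t₀ := by
    intro t₀ ht₀
    obtain ⟨ht₀0, ht₀T⟩ := ht₀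
    rw [Metric.continuousAt_iff]
    intro ε hε
    -- bound for `F₀` on a compact neighbourhood
    obtain ⟨C, hC⟩ := hf_bdd (Set.Icc (t₀ / 2) ((t₀ + T) / 2))
      (fun x hx => ⟨lt_of_lt_of_le (by linarith) hx.1, lt_of_le_of_lt hx.2 (by linarith)⟩)
      isCompact_Icc
    set M : ℝ := max C 1 with hMdef
    have hM0 : (0:ℝ) < M := lt_of_lt_of_le zero_lt_one (le_max_right _ _)
    have hFM : ∀ᵐ s ∂volume.restrict (Set.Icc (t₀ / 2) ((t₀ + T) / 2)), F₀ s ≤ M := by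
      have hsubKT : Set.Icc (t₀ / 2) ((t₀ + T) / 2) ⊆ Set.Ioo (0 : ℝ) T := fun x hx =>
        ⟨lt_of_lt_of_le (by linarith) hx.1, lt_of_le_of_lt hx.2 (by linarith)⟩
      have h1 : f =ᵐ[volume.restrict (Set.Icc (t₀ / 2) ((t₀ + T) / 2))] F₀ :=
        ae_restrict_of_ae_restrict_of_subset hsubKT hF₀ae
      filter_upwards [h1, ae_restrict_mem measurableSet_Icc] with s hs hsK
      rw [← hs]
      exact le_trans (hC ⟨s, hsK, rfl⟩) (le_max_left _ _)
    -- primitive of `G` and the choice of `δ₁`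
    have hΦcont := (hGint.continuous_primitive 0).continuousAt (x := 0)
    rw [Metric.continuousAt_iff] at hΦcont
    obtain ⟨δ₁, hδ₁0, hΦsmall⟩ := hΦcont (ε / (3 * M)) (div_pos hε (by linarith))
    -- the parameters
    set δ' : ℝ := min (min (δ₁ / 3) (t₀ / 2)) ((T - t₀) / 2) with hδ'def
    have hδ'0 : 0 < δ' := lt_min (lt_min (by linarith) (by linarith)) (by linarith)
    have hδ'a : δ' ≤ δ₁ / 3 := le_trans (min_le_left _ _) (min_le_left _ _)
    have hδ'b : δ' ≤ t₀ / 2 := le_trans (min_le_left _ _) (min_le_right _ _)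
    have hδ'c : δ' ≤ (T - t₀) / 2 := min_le_right _ _
    set c : ℝ := t₀ - δ' with hcdef
    set η : ℝ := δ' / 2 with hηdef
    have hη0 : 0 < η := by positivity
    -- bound for `G` on `[δ'/2, t₀ + η]`
    have hGsub : Set.Icc (δ' / 2) (t₀ + η) ⊆ Set.Ioo (0 : ℝ) T := fun x hx =>
      ⟨lt_of_lt_of_le (by positivity) hx.1,
        lt_of_le_of_lt hx.2 (by rw [hηdef]; linarith)⟩
    obtain ⟨Cg, hCg⟩ :=
      (isCompact_Icc (a := δ' / 2) (b := t₀ + η)).exists_bound_of_continuousOn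
        (hGcont.mono hGsub)
    have hCg0 : (0:ℝ) ≤ Cg := le_trans (norm_nonneg _)
      (hCg (δ' / 2) ⟨le_rfl, by rw [hηdef]; linarith⟩)
    -- continuity of the truncated convolution
    have hH₁cont : ContinuousAt
        (fun t => ∫ s, (Set.Iic c).indicator (fun s => F₀ s * G (t - s)) s) t₀ := by
      refine continuousAt_of_dominated (bound := fun s => Cg * F₀ s) ?_ ?_ ?_ ?_
      · refine Filter.Eventually.of_forall fun t => ?_
        exact ((hF₀meas.mul (hGmeas.comp (measurable_const.sub measurable_id) :
          Measurable fun s : ℝ => G (t - s))).indicator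
            measurableSet_Iic).aestronglyMeasurable
      · refine Filter.eventually_of_mem (Icc_mem_nhds (show t₀ - η < t₀ by linarith)
          (show t₀ < t₀ + η by linarith)) fun t ht => ?_
        refine Filter.Eventually.of_forall fun s => ?_
        by_cases hs : s ∈ Set.Iic c
        · rw [Set.indicator_of_mem hs]
          by_cases hs0 : 0 < s
          · have hmem : t - s ∈ Set.Icc (δ' / 2) (t₀ + η) := by
              have h1 : t₀ - η ≤ t := ht.1
              have h2 : t ≤ t₀ + η := ht.2
              have h3 : s ≤ c := hs
              exact ⟨by rw [hcdef] at h3; rw [hηdef] at h1; linarith,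
                by linarith⟩
            rw [norm_mul, Real.norm_of_nonneg (hF₀nn s)]
            calc F₀ s * ‖G (t - s)‖ ≤ F₀ s * Cg :=
                  mul_le_mul_of_nonneg_left (hCg _ hmem) (hF₀nn s)
              _ = Cg * F₀ s := mul_comm _ _
          · rw [hF₀zero s (fun hmem => hs0 hmem.1), zero_mul, norm_zero]
            exact mul_nonneg hCg0 le_rfl
        · rw [Set.indicator_of_notMem hs, norm_zero]
          exact mul_nonneg hCg0 (hF₀nn s)
      · exact hF₀int.const_mul Cg
      · refine Filter.Eventually.of_forall fun s => ?_
        by_cases hs : s ∈ Set.Iic c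
        · simp only [Set.indicator_of_mem hs]
          by_cases hs0 : 0 < s
          · have hG : ContinuousAt G (t₀ - s) := by
              refine hGcont.continuousAt (isOpen_Ioo.mem_nhds ?_)
              have h2 : s ≤ c := hs
              rw [hcdef] at h2
              exact ⟨by linarith, by linarith⟩
            have hinner : ContinuousAt (fun t : ℝ => t - s) t₀ :=
              (continuous_id.sub continuous_const).continuousAt
            exact continuousAt_const.mul (ContinuousAt.comp (x := t₀) (g := G) hG hinner)
          · have hzero : F₀ s = 0 := hF₀zero s (fun hmem => hs0 hmem.1)
            simp only [hzero, zero_mul]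
            exact continuousAt_const
        · simp only [Set.indicator_of_notMem hs]
          exact continuousAt_const
    rw [Metric.continuousAt_iff] at hH₁cont
    obtain ⟨δ₂, hδ₂0, hH₁⟩ := hH₁cont (ε / 3) (by positivity)
    have hIccsub : Set.Icc (t₀ - η) (t₀ + η) ⊆ Set.Ioo (0 : ℝ) T := fun x hx => by
      have h1 := hx.1; have h2 := hx.2
      rw [hηdef] at h1 h2
      exact ⟨by linarith, by linarith⟩
    -- splitting of the integral
    have hsplit : ∀ τ ∈ Set.Icc (t₀ - η) (t₀ + η),
        (∫ s, F₀ s * G (τ - s)) =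
          (∫ s, (Set.Iic c).indicator (fun s => F₀ s * G (τ - s)) s)
            + ∫ s in Set.Ioi c, F₀ s * G (τ - s) := by
      intro τ hτ
      have hint := hphiInt τ (hIccsub hτ)
      rw [integral_indicator measurableSet_Iic,
        ← integral_add_compl measurableSet_Iic hint, Set.compl_Iic]
    -- the remainder is small
    have hR : ∀ τ ∈ Set.Icc (t₀ - η) (t₀ + η),
        0 ≤ (∫ s in Set.Ioi c, F₀ s * G (τ - s)) ∧
          (∫ s in Set.Ioi c, F₀ s * G (τ - s)) < ε / 3 := by
      intro τ hτ
      have hτIoo := hIccsub hτ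
      have hτ1 := hτ.1; have hτ2 := hτ.2
      have hcτ : c < τ := by rw [hcdef]; rw [hηdef] at hτ1; linarith
      refine ⟨setIntegral_nonneg measurableSet_Ioi fun s _ =>
        mul_nonneg (hF₀nn s) (hGnn _), ?_⟩
      have hstep1 : (∫ s in Set.Ioi c, F₀ s * G (τ - s)) =
          ∫ s in Set.Ioo c τ, F₀ s * G (τ - s) := by
        have hdisj : Disjoint (Set.Ioo c τ) (Set.Ici τ) := by
          rw [Set.disjoint_left]
          intro a ha hb
          exact absurd hb (not_le.2 ha.2)
        have hzero : (∫ s in Set.Ici τ, F₀ s * G (τ - s)) = 0 :=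
          setIntegral_eq_zero_of_forall_eq_zero
            (fun x hx => hphi0 τ hτIoo x (fun hmem => absurd hx (not_le.2 hmem.2)))
        rw [← Set.Ioo_union_Ici_eq_Ioi hcτ,
          setIntegral_union hdisj measurableSet_Ici
            (hphiInt τ hτIoo).integrableOn (hphiInt τ hτIoo).integrableOn,
          hzero, add_zero]
      have hGτint : Integrable (fun s => G (τ - s)) :=
        ((Measure.measurePreserving_sub_left (volume : Measure ℝ) τ).integrable_comp_emb
          (MeasurableEquiv.subLeft τ).measurableEmbedding).2 hGint
      have hsubK : Set.Ioo c τ ⊆ Set.Icc (t₀ / 2) ((t₀ + T) / 2) := by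
        intro x hx
        have h1 := hx.1; have h2 := hx.2
        rw [hcdef] at h1
        constructor
        · linarith
        · rw [hηdef] at hτ2; linarith
      have hstep2 : (∫ s in Set.Ioo c τ, F₀ s * G (τ - s)) ≤
          ∫ s in Set.Ioo c τ, M * G (τ - s) := by
        refine integral_mono_ae (hphiInt τ hτIoo).integrableOn
          (hGτint.const_mul M).integrableOn ?_
        filter_upwards [ae_restrict_of_ae_restrict_of_subset hsubK hFM] with s hsM
        exact mul_le_mul_of_nonneg_right hsM (hGnn _)
      have hstep4 : (∫ s in Set.Ioo c τ, G (τ - s)) = ∫ u in Set.Ioo 0 (τ - c), G u := by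
        have h := (Measure.measurePreserving_sub_left (volume : Measure ℝ)
          τ).setIntegral_image_emb (MeasurableEquiv.subLeft τ).measurableEmbedding G
          (Set.Ioo c τ)
        rw [Set.image_const_sub_Ioo, sub_self] at h
        exact h.symm
      have hτc1 : 0 < τ - c := by linarith
      have hτc2 : τ - c < δ₁ := by
        rw [hcdef]; rw [hηdef] at hτ2; linarith
      have hΦ := hΦsmall (show dist (τ - c) 0 < δ₁ by
        rw [Real.dist_eq, sub_zero, abs_of_pos hτc1]; exact hτc2)
      rw [Real.dist_eq, intervalIntegral.integral_same, sub_zero] at hΦ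
      calc (∫ s in Set.Ioi c, F₀ s * G (τ - s))
          = ∫ s in Set.Ioo c τ, F₀ s * G (τ - s) := hstep1
        _ ≤ ∫ s in Set.Ioo c τ, M * G (τ - s) := hstep2
        _ = M * ∫ s in Set.Ioo c τ, G (τ - s) := integral_const_mul M _
        _ = M * ∫ u in (0:ℝ)..(τ - c), G u := by
            rw [hstep4, intervalIntegral.integral_of_le hτc1.le,
              integral_Ioc_eq_integral_Ioo]
        _ ≤ M * |∫ u in (0:ℝ)..(τ - c), G u| :=
            mul_le_mul_of_nonneg_left (le_abs_self _) hM0.le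
        _ < M * (ε / (3 * M)) := mul_lt_mul_of_pos_left hΦ hM0
        _ = ε / 3 := by field_simp
    -- conclusion
    refine ⟨min δ₂ η, lt_min hδ₂0 hη0, ?_⟩
    intro t htd
    have htmem : t ∈ Set.Icc (t₀ - η) (t₀ + η) := by
      have h1 : |t - t₀| < η := lt_of_lt_of_le (by rw [← Real.dist_eq]; exact htd)
        (min_le_right _ _)
      rw [abs_lt] at h1
      exact ⟨by linarith [h1.1], by linarith [h1.2]⟩
    have h0mem : t₀ ∈ Set.Icc (t₀ - η) (t₀ + η) := ⟨by linarith, by linarith⟩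
    have h1 := hH₁ (lt_of_lt_of_le htd (min_le_left _ _))
    obtain ⟨hRt0, hRt1⟩ := hR t htmem
    obtain ⟨hR₀0, hR₀1⟩ := hR t₀ h0mem
    rw [Real.dist_eq] at h1 ⊢
    rw [hsplit t htmem, hsplit t₀ h0mem]
    rw [abs_lt] at h1 ⊢
    constructor
    · linarith [h1.1]
    · linarith [h1.2]
  refine ⟨hPoint, ?_, ?_⟩
  · exact (hHint.integrableOn.congr_fun (fun t ht => (hHeq t ht).symm) measurableSet_Ioo)
  · have hH : ContinuousOn (fun t => ∫ s, F₀ s * G (t - s)) (Set.Ioo (0 : ℝ) T) :=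
      fun t ht => (hHcont t ht).continuousWithinAt
    exact hH.congr hHeq
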